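/- Let T be a finite tree and A a generalized Laplacian of T. Let λ be an eigenvalue of A such that every eigenvector of A with eigenvalue λ vanishes at some vertex, and let Z be the set of vertices at which all eigenvectors of A with eigenvalue λ vanish. Let T_1, …, T_m be the connected components of the forest obtained by deleting Z from T, and let A_1, …, A_m be the principal submatrices of A indexed by the vertex sets of T_1, …, T_m. Then for each i = 1, …, m, λ is a simple eigenvalue of A_i and A_i has an eigenvector with eigenvalue λ that is nonzero at every vertex of T_i. -/

import Mathlib

open scoped Classical

/-- `A` is a generalized Laplacian of the graph `G`: a real symmetric matrix with
`A u v < 0` when `u` and `v` are adjacent and `A u v = 0` when `u ≠ v` are non-adjacent. -/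
def IsGenLaplacian {V : Type*} [Fintype V] (G : SimpleGraph V) (A : Matrix V V ℝ) : Prop :=
  A.IsSymm ∧ ∀ u v : V, u ≠ v →
    (G.Adj u v → A u v < 0) ∧ (¬ G.Adj u v → A u v = 0)

/-- The number of sign graphs of `f` on `G`: the number of connected components of the
subgraph induced on `{v | f v > 0}` plus the number of connected components of the subgraph
induced on `{v | f v < 0}`. -/
noncomputable def numSignGraphs {V : Type*} (G : SimpleGraph V) (f : V → ℝ) : ℕ :=
  Nat.card (G.induce {v | 0 < f v}).ConnectedComponent +
  Nat.card (G.induce {v | f v < 0}).ConnectedComponent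

/-- `lam` is an eigenvalue of the matrix `A`. -/
def IsEigenvalue {V : Type*} [Fintype V] (A : Matrix V V ℝ) (lam : ℝ) : Prop :=
  ∃ f : V → ℝ, f ≠ 0 ∧ A.mulVec f = lam • f

/-- The (geometric) multiplicity of `lam` as an eigenvalue of `A`. -/
noncomputable def eigMult {V : Type*} [Fintype V] (A : Matrix V V ℝ) (lam : ℝ) : ℕ :=
  Module.finrank ℝ
    ↥(LinearMap.ker (A.mulVecLin - lam • (LinearMap.id : (V → ℝ) →ₗ[ℝ] (V → ℝ))))


lemma flow_zero {V : Type*} [Fintype V] {G : SimpleGraph V} (hG : G.IsAcyclic)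
    (D : V → V → ℝ) (hanti : ∀ x y, D x y = - D y x)
    (hsupp : ∀ x y, ¬ G.Adj x y → D x y = 0)
    (hdiv : ∀ x, ∑ y, D x y = 0) : ∀ a b, D a b = 0 := by
  intro a b
  by_cases hab : G.Adj a b
  · have hbridge : G.IsBridge s(a, b) :=
      (SimpleGraph.isAcyclic_iff_forall_adj_isBridge.mp hG) hab
    rw [SimpleGraph.isBridge_iff] at hbridge
    set G' := G \ SimpleGraph.fromEdgeSet {s(a, b)} with hG'
    set S : Finset V := Finset.univ.filter (fun x => G'.Reachable a x) with hS
    have haS : a ∈ S := by simp [hS]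
    have hbS : b ∉ S := by simp [hS]; exact hbridge
    -- crossing edges other than (a,b) don't exist
    have hcross : ∀ x ∈ S, ∀ y ∉ S, D x y ≠ 0 → x = a ∧ y = b := by
      intro x hx y hy hD
      have hadj : G.Adj x y := by by_contra h; exact hD (hsupp x y h)
      by_cases he : s(x, y) = s(a, b)
      · rw [Sym2.eq_iff] at he
        rcases he with ⟨rfl, rfl⟩ | ⟨rfl, rfl⟩
        · exact ⟨rfl, rfl⟩
        · exact absurd hx hbS
      · have : G'.Adj x y := by
          rw [hG', SimpleGraph.sdiff_adj, SimpleGraph.fromEdgeSet_adj]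
          exact ⟨hadj, fun hc => he (by simpa using hc.1)⟩
        have hyS : y ∈ S := by
          simp only [hS, Finset.mem_filter, Finset.mem_univ, true_and] at hx ⊢
          exact hx.trans this.reachable
        exact absurd hyS hy
    have hsum0 : ∑ x ∈ S, ∑ y, D x y = 0 := by
      simp [hdiv]
    have hsplit : ∀ x, ∑ y, D x y = ∑ y ∈ S, D x y + ∑ y ∈ Sᶜ, D x y := by
      intro x
      rw [Finset.sum_add_sum_compl]
    have hSS : ∑ x ∈ S, ∑ y ∈ S, D x y = 0 := by
      have h1 : ∑ x ∈ S, ∑ y ∈ S, D x y = - ∑ x ∈ S, ∑ y ∈ S, D x y := by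
        calc ∑ x ∈ S, ∑ y ∈ S, D x y = ∑ x ∈ S, ∑ y ∈ S, -D y x := by
              exact Finset.sum_congr rfl fun x _ => Finset.sum_congr rfl fun y _ => hanti x y
          _ = - ∑ x ∈ S, ∑ y ∈ S, D y x := by simp [Finset.sum_neg_distrib]
          _ = - ∑ x ∈ S, ∑ y ∈ S, D x y := by rw [Finset.sum_comm]
      linarith
    have hout : ∑ x ∈ S, ∑ y ∈ Sᶜ, D x y = 0 := by
      have := hsum0
      simp_rw [hsplit] at this
      rw [Finset.sum_add_distrib, hSS] at this
      linarith
    have hsingle : ∑ x ∈ S, ∑ y ∈ Sᶜ, D x y = D a b := by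
      rw [Finset.sum_eq_single_of_mem a haS]
      · rw [Finset.sum_eq_single_of_mem b (Finset.mem_compl.mpr hbS)]
        intro y hy hyb
        by_contra h
        exact hyb (hcross a haS y (Finset.mem_compl.mp hy) h).2
      · intro x hx hxa
        apply Finset.sum_eq_zero
        intro y hy
        by_contra h
        exact hxa (hcross x hx y (Finset.mem_compl.mp hy) h).1
    rw [← hsingle, hout]
  · exact hsupp a b hab

lemma exists_generic {V : Type*} [Fintype V] (W : Submodule ℝ (V → ℝ)) (Z : Set V)
    (h : ∀ v, v ∉ Z → ∃ f ∈ W, f v ≠ 0) : ∃ f ∈ W, ∀ v, v ∉ Z → f v ≠ 0 := by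
  have key : ∀ s : Finset V, (∀ v ∈ s, v ∉ Z) → ∃ f ∈ W, ∀ v ∈ s, f v ≠ 0 := by
    intro s
    induction s using Finset.induction_on with
    | empty => intro _; exact ⟨0, W.zero_mem, by simp⟩
    | @insert v s hv ih =>
      intro hins
      obtain ⟨f, hfW, hf⟩ := ih (fun u hu => hins u (Finset.mem_insert_of_mem hu))
      obtain ⟨g, hgW, hgv⟩ := h v (hins v (Finset.mem_insert_self v s))
      obtain ⟨ε, hε⟩ := Finset.exists_notMem ((insert v s).image (fun u => - f u / g u))
      refine ⟨f + ε • g, W.add_mem hfW (W.smul_mem ε hgW), ?_⟩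
      intro u hu
      simp only [Pi.add_apply, Pi.smul_apply, smul_eq_mul]
      intro hzero
      by_cases hgu : g u = 0
      · rw [hgu, mul_zero, add_zero] at hzero
        rcases Finset.mem_insert.mp hu with rfl | hu'
        · exact hgv hgu
        · exact hf u hu' hzero
      · apply hε
        rw [Finset.mem_image]
        exact ⟨u, hu, by field_simp; linarith [hzero]⟩
  obtain ⟨f, hfW, hf⟩ := key (Finset.univ.filter (fun v => v ∉ Z))
    (fun v hv => (Finset.mem_filter.mp hv).2)
  exact ⟨f, hfW, fun v hv => hf v (Finset.mem_filter.mpr ⟨Finset.mem_univ v, hv⟩)⟩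

private lemma mulVec_apply' {n : Type*} [Fintype n] (B : Matrix n n ℝ) (v : n → ℝ) (i : n) :
    B.mulVec v i = ∑ j, B i j * v j := rfl

/-- Bıyıkoğlu: with `Z` the common vanishing set of the `λ`-eigenvectors of a
generalized Laplacian of a tree, on each connected component of `T - Z` the corresponding
principal submatrix of `A` has `λ` as a simple eigenvalue, with an eigenvector that is
nonzero at every vertex of the component. -/
theorem biyikoglu_components (V : Type*) [Fintype V] (G : SimpleGraph V)
    (hT : G.IsTree) (A : Matrix V V ℝ) (hA : IsGenLaplacian G A) (lam : ℝ)
    (hlam : IsEigenvalue A lam)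
    (hvan : ∀ f : V → ℝ, f ≠ 0 → A.mulVec f = lam • f → ∃ v : V, f v = 0)
    (Z : Set V)
    (hZ : Z = {v : V | ∀ f : V → ℝ, f ≠ 0 → A.mulVec f = lam • f → f v = 0}) :
    ∀ C : (G.induce Zᶜ).ConnectedComponent,
      eigMult (fun a b : C.supp => A a.1.1 b.1.1) lam = 1 ∧
      ∃ g : C.supp → ℝ,
        Matrix.mulVec (fun a b : C.supp => A a.1.1 b.1.1) g = lam • g ∧
        ∀ x : C.supp, g x ≠ 0 := by
  intro C
  have hsym : ∀ x y : V, A y x = A x y := fun x y => congrFun (congrFun hA.1 x) y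
  set W := LinearMap.ker (A.mulVecLin - lam • (LinearMap.id : (V → ℝ) →ₗ[ℝ] (V → ℝ))) with hW
  have hmemW : ∀ f : V → ℝ, f ∈ W ↔ A.mulVec f = lam • f := by
    intro f
    rw [hW, LinearMap.mem_ker, LinearMap.sub_apply, LinearMap.smul_apply, LinearMap.id_apply,
      sub_eq_zero, Matrix.mulVecLin_apply]
  have hvanZ : ∀ f ∈ W, ∀ v ∈ Z, f v = 0 := by
    intro f hf v hv
    rw [hZ] at hv
    by_cases h0 : f = 0
    · simp [h0]
    · exact hv f h0 ((hmemW f).mp hf)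
  have hnonvan : ∀ v, v ∉ Z → ∃ f ∈ W, f v ≠ 0 := by
    intro v hv
    rw [hZ] at hv
    simp only [Set.mem_setOf_eq] at hv
    push_neg at hv
    obtain ⟨f, hf0, hfe, hfv⟩ := hv
    exact ⟨f, (hmemW f).mpr hfe, hfv⟩
  obtain ⟨f₀, hf₀W, hf₀⟩ := exists_generic W Z hnonvan
  set ι : C.supp → V := fun a => a.1.1 with hι
  have hinj : Function.Injective ι := fun a b hab => Subtype.ext (Subtype.ext hab)
  -- a basepoint
  obtain ⟨u0, hu0⟩ := C.exists_rep
  have hu0' : u0 ∈ C.supp := by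
    rw [SimpleGraph.ConnectedComponent.mem_supp_iff]; exact hu0
  set a0 : C.supp := ⟨u0, hu0'⟩ with ha0
  -- entries of A vanish between C and the rest (outside Z)
  have hoff : ∀ (x : C.supp) (w : V), w ∉ Set.range ι → w ∉ Z → A (ι x) w = 0 := by
    intro x w hw hwZ
    by_contra hA0
    have hne : ι x ≠ w := fun h => hw ⟨x, h⟩
    have hadj : G.Adj (ι x) w := by
      by_contra hnadj
      exact hA0 ((hA.2 (ι x) w hne).2 hnadj)
    have hadj' : (G.induce Zᶜ).Adj x.1 ⟨w, hwZ⟩ := hadj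
    have hmem : (⟨w, hwZ⟩ : ↥Zᶜ) ∈ C.supp := by
      rw [SimpleGraph.ConnectedComponent.mem_supp_iff]
      rw [← (SimpleGraph.ConnectedComponent.mem_supp_iff C x.1).mp x.2]
      exact (SimpleGraph.ConnectedComponent.sound hadj'.reachable).symm
    exact hw ⟨⟨⟨w, hwZ⟩, hmem⟩, rfl⟩
  -- sums over V reduce to sums over C for suitably vanishing functions
  have hsum : ∀ (h : V → ℝ) (x : C.supp), (∀ w, w ∉ Set.range ι → A (ι x) w * h w = 0) →
      A.mulVec h (ι x)
        = Matrix.mulVec (fun a b : C.supp => A (ι a) (ι b)) (fun a => h (ι a)) x := by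
    intro h x hvan'
    rw [mulVec_apply']
    calc ∑ w, A (ι x) w * h w
        = ∑ w ∈ Finset.univ.image ι, A (ι x) w * h w := by
          refine (Finset.sum_subset (Finset.subset_univ _) ?_).symm
          intro w _ hw
          refine hvan' w ?_
          rintro ⟨a, rfl⟩
          exact hw (Finset.mem_image.mpr ⟨a, Finset.mem_univ a, rfl⟩)
      _ = ∑ a : C.supp, A (ι x) (ι a) * h (ι a) :=
          Finset.sum_image (fun a _ b _ hab => hinj hab)
  -- the restricted eigenvector
  set fC : C.supp → ℝ := fun a => f₀ (ι a) with hfC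
  have hfC_ne : ∀ x : C.supp, fC x ≠ 0 := fun x => hf₀ (ι x) x.1.2
  have hfC_eig : Matrix.mulVec (fun a b : C.supp => A (ι a) (ι b)) fC = lam • fC := by
    funext x
    have hvan' : ∀ w, w ∉ Set.range ι → A (ι x) w * f₀ w = 0 := by
      intro w hw
      by_cases hwZ : w ∈ Z
      · rw [hvanZ f₀ hf₀W w hwZ, mul_zero]
      · rw [hoff x w hw hwZ, zero_mul]
    calc Matrix.mulVec (fun a b : C.supp => A (ι a) (ι b)) fC x
        = A.mulVec f₀ (ι x) := (hsum f₀ x hvan').symm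
      _ = (lam • f₀) (ι x) := congrFun ((hmemW f₀).mp hf₀W) (ι x)
      _ = (lam • fC) x := rfl
  -- extension by zero of eigenvectors of the submatrix
  have hext : ∀ g : C.supp → ℝ,
      Matrix.mulVec (fun a b : C.supp => A (ι a) (ι b)) g = lam • g →
      ∀ x : C.supp, A.mulVec (Function.extend ι g 0) (ι x) = lam * g x := by
    intro g hg x
    have hvan' : ∀ w, w ∉ Set.range ι → A (ι x) w * Function.extend ι g 0 w = 0 := by
      intro w hw
      rw [Function.extend_apply' _ _ _ (fun h => hw h)]
      simp
    rw [hsum (Function.extend ι g 0) x hvan']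
    have he : (fun a => Function.extend ι g 0 (ι a)) = g :=
      funext fun a => hinj.extend_apply g 0 a
    rw [he, hg]
    rfl
  -- key: every eigenvector of the submatrix is a multiple of fC
  have key : ∀ g : C.supp → ℝ,
      Matrix.mulVec (fun a b : C.supp => A (ι a) (ι b)) g = lam • g →
      ∃ c : ℝ, g = c • fC := by
    intro g hg
    set fh := Function.extend ι fC 0 with hfh
    set gh := Function.extend ι g 0 with hgh
    have hfh_eq : ∀ a : C.supp, fh (ι a) = fC a := fun a => hinj.extend_apply fC 0 a
    have hgh_eq : ∀ a : C.supp, gh (ι a) = g a := fun a => hinj.extend_apply g 0 a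
    have hfh0 : ∀ w, w ∉ Set.range ι → fh w = 0 := by
      intro w hw; rw [hfh, Function.extend_apply' _ _ _ (fun h => hw h)]; rfl
    have hgh0 : ∀ w, w ∉ Set.range ι → gh w = 0 := by
      intro w hw; rw [hgh, Function.extend_apply' _ _ _ (fun h => hw h)]; rfl
    set D : V → V → ℝ := fun x y => A x y * (fh x * gh y - gh x * fh y) with hD
    have hDz : ∀ x y, D x y = 0 := by
      apply flow_zero hT.2 D
      · intro x y
        simp only [hD]
        rw [hsym x y]
        ring
      · intro x y hnadj
        by_cases hxy : x = y
        · subst hxy; simp only [hD]; ring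
        · simp only [hD]
          rw [(hA.2 x y hxy).2 hnadj]; ring
      · intro x
        have expand : ∑ y, D x y
            = fh x * (∑ y, A x y * gh y) - gh x * (∑ y, A x y * fh y) := by
          rw [Finset.mul_sum, Finset.mul_sum, ← Finset.sum_sub_distrib]
          refine Finset.sum_congr rfl fun y _ => ?_
          simp only [hD]; ring
        rw [expand]
        by_cases hx : x ∈ Set.range ι
        · obtain ⟨a, rfl⟩ := hx
          have e1 : ∑ y, A (ι a) y * gh y = lam * g a := by
            rw [← mulVec_apply']; exact hext g hg a
          have e2 : ∑ y, A (ι a) y * fh y = lam * fC a := by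
            rw [← mulVec_apply']; exact hext fC hfC_eig a
          rw [e1, e2, hfh_eq, hgh_eq]; ring
        · rw [hfh0 x hx, hgh0 x hx]; ring
    have hedge : ∀ x y : V, G.Adj x y → fh x * gh y = gh x * fh y := by
      intro x y hadj
      have h0 := hDz x y
      rw [hD] at h0
      have hAne : A x y ≠ 0 := ((hA.2 x y hadj.ne).1 hadj).ne
      have := (mul_eq_zero.mp h0).resolve_left hAne
      linarith [this]
    have hratio : ∀ (x y : ↥Zᶜ) (w : (G.induce Zᶜ).Walk x y), x ∈ C.supp →
        fh x.1 * gh y.1 = gh x.1 * fh y.1 := by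
      intro x y w
      induction w with
      | nil => intro _; ring
      | @cons u v y' hadj p ih =>
        intro hu
        have hGadj : G.Adj u.1 v.1 := hadj
        have hv : v ∈ C.supp := by
          rw [SimpleGraph.ConnectedComponent.mem_supp_iff] at hu ⊢
          rw [← hu]
          exact (SimpleGraph.ConnectedComponent.sound hadj.reachable).symm
        have e1 := hedge u.1 v.1 hGadj
        have e2 := ih hv
        have hvne : fh v.1 ≠ 0 := by
          have hveq : fh v.1 = fC ⟨v, hv⟩ := hfh_eq ⟨v, hv⟩
          rw [hveq]; exact hfC_ne _
        have h3 : (fh u.1 * gh y'.1) * fh v.1 = (gh u.1 * fh y'.1) * fh v.1 := by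
          linear_combination fh y'.1 * e1 + fh u.1 * e2
        exact mul_right_cancel₀ hvne h3
    refine ⟨g a0 / fC a0, funext fun a => ?_⟩
    have hreach : (G.induce Zᶜ).Reachable u0 a.1 := by
      apply SimpleGraph.ConnectedComponent.exact
      rw [(SimpleGraph.ConnectedComponent.mem_supp_iff C a.1).mp a.2]
      exact hu0
    obtain ⟨w⟩ := hreach
    have hr := hratio u0 a.1 w hu0'
    have hr' : fC a0 * g a = g a0 * fC a := by
      have h1 : fh u0.1 = fC a0 := hfh_eq a0
      have h2 : gh u0.1 = g a0 := hgh_eq a0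
      have h3 : fh a.1.1 = fC a := hfh_eq a
      have h4 : gh a.1.1 = g a := hgh_eq a
      rw [h1, h2, h3, h4] at hr
      exact hr
    have hne := hfC_ne a0
    show g a = (g a0 / fC a0) * fC a
    rw [div_mul_eq_mul_div, eq_div_iff hne]
    linear_combination hr'
  -- conclusion
  have hfC0 : fC ≠ 0 := fun h => hfC_ne a0 (congrFun h a0)
  constructor
  · show Module.finrank ℝ
      ↥(LinearMap.ker ((Matrix.mulVecLin (fun a b : C.supp => A (ι a) (ι b)))
        - lam • (LinearMap.id : (C.supp → ℝ) →ₗ[ℝ] (C.supp → ℝ)))) = 1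
    have hker : LinearMap.ker ((Matrix.mulVecLin (fun a b : C.supp => A (ι a) (ι b)))
        - lam • (LinearMap.id : (C.supp → ℝ) →ₗ[ℝ] (C.supp → ℝ)))
        = Submodule.span ℝ {fC} := by
      apply le_antisymm
      · intro g hg
        rw [LinearMap.mem_ker, LinearMap.sub_apply, LinearMap.smul_apply, LinearMap.id_apply,
          sub_eq_zero] at hg
        obtain ⟨c, hc⟩ := key g hg
        exact Submodule.mem_span_singleton.mpr ⟨c, hc.symm⟩
      · rw [Submodule.span_le, Set.singleton_subset_iff]
        rw [SetLike.mem_coe, LinearMap.mem_ker, LinearMap.sub_apply, LinearMap.smul_apply,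
          LinearMap.id_apply, sub_eq_zero]
        exact hfC_eig
    rw [hker]
    exact finrank_span_singleton hfC0
  · exact ⟨fC, hfC_eig, hfC_ne⟩
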